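/- Fix β ≥ 0 and set the prices p i = c i + β. Let U : Ω → (ι → ℝ) be measurable random utilities and let d : Ω → Option ι be measurable such that for every ω, d ω is user-optimal for (p, U ω). Then the expected profit equals β · ℙ(max_{i}(U i − c i) ≥ β), i.e., β times the probability that the user accepts at least one contract. (Probabilistic form of the paper's Theorem 6.) -/

import Mathlib

open Finset MeasureTheory

/-- A decision `d` is user-optimal for prices `p` and utilities `u`. -/
def userOptimal {ι : Type*} [Fintype ι] (p u : ι → ℝ) : Option ι → Prop
  | some i => 0 ≤ u i - p i ∧ ∀ j, u j - p j ≤ u i - p i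
  | none => ∀ j, u j - p j < 0

/-- Profit of a decision: `p i - c i` if option `i` is accepted, `0` otherwise. -/
def profit {ι : Type*} (p c : ι → ℝ) : Option ι → ℝ
  | some i => p i - c i
  | none => 0

/-- Probabilistic form of the paper's Theorem 6: under the fixed-profit pricing
`p i = c i + β`, the expected profit equals `β` times the probability that the user
accepts at least one contract, i.e. `β · ℙ(max_i (U i - c i) ≥ β)`. -/
theorem fixed_profit_expected {ι : Type*} [Fintype ι] [Nonempty ι]
    {Ω : Type*} [MeasurableSpace Ω] (ℙ : Measure Ω) [IsProbabilityMeasure ℙ]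
    (c : ι → ℝ) (β : ℝ) (hβ : 0 ≤ β) (p : ι → ℝ) (hp : ∀ i, p i = c i + β)
    (U : Ω → ι → ℝ) (hU : Measurable U)
    (d : Ω → Option ι) (hd : ∀ o : Option ι, MeasurableSet {ω | d ω = o})
    (hopt : ∀ ω, userOptimal p (U ω) (d ω)) :
    (∫ ω, profit p c (d ω) ∂ℙ) =
      β * (ℙ {ω | β ≤ univ.sup' univ_nonempty (fun i => U ω i - c i)}).toReal := by
  set S : Set Ω := {ω | β ≤ univ.sup' univ_nonempty (fun i => U ω i - c i)} with hS
  have hset : S = {ω | d ω = none}ᶜ := by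
    ext ω
    simp only [hS, Set.mem_setOf_eq, Set.mem_compl_iff]
    constructor
    · intro h hnone
      obtain ⟨j, -, hj⟩ := exists_mem_eq_sup' univ_nonempty (fun i => U ω i - c i)
      have := (hnone ▸ hopt ω : userOptimal p (U ω) none) j
      rw [hp j] at this
      linarith [hj ▸ h]
    · intro h
      cases hdw : d ω with
      | none => exact absurd hdw h
      | some i =>
        have := (hdw ▸ hopt ω : userOptimal p (U ω) (some i)).1
        rw [hp i] at this
        have hle : U ω i - c i ≤ univ.sup' univ_nonempty (fun i => U ω i - c i) :=
          le_sup' (fun i => U ω i - c i) (mem_univ i)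
        linarith
  have hmeas : MeasurableSet S := by rw [hset]; exact (hd none).compl
  have hfun : ∀ ω, profit p c (d ω) = S.indicator (fun _ => β) ω := by
    intro ω
    by_cases hω : ω ∈ S
    · rw [Set.indicator_of_mem hω]
      rcases hdw : d ω with _ | i
      · exact ((hset ▸ hω : ω ∈ {ω | d ω = none}ᶜ) hdw).elim
      · simp [profit, hp i]
    · rw [Set.indicator_of_notMem hω]
      have : d ω = none := by
        by_contra h
        exact hω (hset ▸ (h : ω ∈ {ω | d ω = none}ᶜ))
      simp [profit, this]
  calc (∫ ω, profit p c (d ω) ∂ℙ) = ∫ ω, S.indicator (fun _ => β) ω ∂ℙ := by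
        simp_rw [hfun]
    _ = β * (ℙ S).toReal := by
        rw [integral_indicator_const _ hmeas]
        simp [mul_comm, Measure.real]
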